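/- Let G be a connected graph on n vertices with positive Laplacian eigenvalues λ_1,...,λ_{n-1} and corresponding orthonormal eigenvectors Ψ_1,...,Ψ_{n-1}, and let m > 1 be an integer. In the weighted cone graph C^m_G obtained from G by adding a new apex vertex b joined to every vertex of G by an edge of conductance m (resistance 1/m), with all edges of G having unit resistance, the effective resistance satisfies: R[u,v] = Σ_{k=1}^{n-1} (Ψ_{ku} − Ψ_{kv})²/(λ_k + m) for distinct u,v ∈ V(G), and R[u,b] = Σ_{k=1}^{n-1} Ψ_{ku}²/(λ_k + m) + 1/(nm) for u ∈ V(G). -/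

import Mathlib

open Matrix Finset

open Classical in
/-- The Moore–Penrose pseudoinverse of a real square matrix, defined via the
four Penrose conditions (it is unique when it exists). -/
noncomputable def Matrix.mpinv {m : Type*} [Fintype m] [DecidableEq m]
    (A : Matrix m m ℝ) : Matrix m m ℝ :=
  if h : ∃ B : Matrix m m ℝ,
      A * B * A = A ∧ B * A * B = B ∧ (A * B)ᵀ = A * B ∧ (B * A)ᵀ = B * A
  then h.choose else 0

/-- Effective resistance between `u` and `v` with respect to a (weighted)
Laplacian matrix `L`:  `(e_u - e_v)ᵀ L⁺ (e_u - e_v)`. -/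
noncomputable def effRes {m : Type*} [Fintype m] [DecidableEq m]
    (L : Matrix m m ℝ) (u v : m) : ℝ :=
  (Pi.single u 1 - Pi.single v 1) ⬝ᵥ (L.mpinv *ᵥ (Pi.single u 1 - Pi.single v 1))

/-- The (real) Laplacian matrix of a simple graph. -/
noncomputable def lapm {V : Type*} [Fintype V] [DecidableEq V]
    (G : SimpleGraph V) : Matrix V V ℝ :=
  letI := Classical.decRel G.Adj
  G.lapMatrix ℝ

/-- Resistance distance between two vertices of a simple graph. -/
noncomputable def resDist {V : Type*} [Fintype V] [DecidableEq V]
    (G : SimpleGraph V) (u v : V) : ℝ :=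
  effRes (lapm G) u v

/-- Resistance diameter of a simple graph. -/
noncomputable def resDiam {V : Type*} [Fintype V] [DecidableEq V]
    (G : SimpleGraph V) : ℝ :=
  ⨆ p : V × V, resDist G p.1 p.2

/-- The weighted Laplacian of the cone over `G` with apex `Sum.inr ()`:
edges of `G` have conductance `1` (unit resistance), and each vertex of `G`
is joined to the apex by an edge of conductance `m` (resistance `1/m`). -/
noncomputable def coneLap {V : Type*} [Fintype V] [DecidableEq V]
    (G : SimpleGraph V) (m : ℝ) : Matrix (V ⊕ Unit) (V ⊕ Unit) ℝ :=
  letI := Classical.decRel G.Adj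
  let W : Matrix (V ⊕ Unit) (V ⊕ Unit) ℝ := fun i j =>
    match i, j with
    | Sum.inl a, Sum.inl b => if G.Adj a b then 1 else 0
    | Sum.inl _, Sum.inr _ => m
    | Sum.inr _, Sum.inl _ => m
    | Sum.inr _, Sum.inr _ => 0
  Matrix.of fun i j => (if i = j then ∑ k, W i k else 0) - W i j

/-- The `k`-dimensional hypercube graph `Q_k`. -/
def hypercube (k : ℕ) : SimpleGraph (Fin k → Bool) where
  Adj x y := (Finset.univ.filter fun i => x i ≠ y i).card = 1
  symm := by
    constructor
    intro x y h
    rw [← h]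
    congr 1
    ext i
    simp [ne_comm]
  loopless := by constructor; intro x; simp

/-- The join `G + H` of two graphs on disjoint vertex sets. -/
def graphJoin {V W : Type*} (G : SimpleGraph V) (H : SimpleGraph W) :
    SimpleGraph (V ⊕ W) where
  Adj x y :=
    match x, y with
    | Sum.inl a, Sum.inl b => G.Adj a b
    | Sum.inr a, Sum.inr b => H.Adj a b
    | Sum.inl _, Sum.inr _ => True
    | Sum.inr _, Sum.inl _ => True
  symm := by
    constructor
    rintro (a | a) (b | b) h
    · exact G.adj_symm h
    · trivial
    · trivial
    · exact H.adj_symm h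
  loopless := by
    constructor
    rintro (a | a) h
    · exact G.irrefl h
    · exact H.irrefl h


theorem Matrix.mpinv_eq {ι : Type*} [Fintype ι] [DecidableEq ι]
    (A B : Matrix ι ι ℝ)
    (h1 : A * B * A = A) (h2 : B * A * B = B)
    (h3 : (A * B)ᵀ = A * B) (h4 : (B * A)ᵀ = B * A) :
    A.mpinv = B := by
  have hex : ∃ C : Matrix ι ι ℝ,
      A * C * A = A ∧ C * A * C = C ∧ (A * C)ᵀ = A * C ∧ (C * A)ᵀ = C * A :=
    ⟨B, h1, h2, h3, h4⟩
  rw [Matrix.mpinv, dif_pos hex]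
  obtain ⟨c1, c2, c3, c4⟩ := hex.choose_spec
  set C := hex.choose with hC
  have e1 : A * C = A * B := by
    have step : A * C = (A * C) * (A * B) := by
      conv_lhs => rw [← c3]
      calc (A * C)ᵀ = Cᵀ * Aᵀ := by rw [Matrix.transpose_mul]
        _ = Cᵀ * (A * B * A)ᵀ := by rw [h1]
        _ = Cᵀ * (Aᵀ * (A * B)ᵀ) := by rw [Matrix.transpose_mul]
        _ = Cᵀ * Aᵀ * (A * B) := by rw [h3, mul_assoc]
        _ = (A * C)ᵀ * (A * B) := by rw [Matrix.transpose_mul]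
        _ = (A * C) * (A * B) := by rw [c3]
    rw [step, ← mul_assoc, c1]
  have e2 : C * A = B * A := by
    have step : C * A = (B * A) * (C * A) := by
      conv_lhs => rw [← c4]
      calc (C * A)ᵀ = Aᵀ * Cᵀ := by rw [Matrix.transpose_mul]
        _ = (A * (B * A))ᵀ * Cᵀ := by rw [← mul_assoc, h1]
        _ = (B * A)ᵀ * Aᵀ * Cᵀ := by rw [Matrix.transpose_mul]
        _ = (B * A) * (Aᵀ * Cᵀ) := by rw [h4, mul_assoc]
        _ = (B * A) * (C * A)ᵀ := by rw [Matrix.transpose_mul]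
        _ = (B * A) * (C * A) := by rw [c4]
    rw [step, mul_assoc B A, ← mul_assoc A C, c1]
  calc C = C * A * C := c2.symm
    _ = B * A * C := by rw [e2]
    _ = B * (A * C) := by rw [mul_assoc]
    _ = B * (A * B) := by rw [e1]
    _ = B * A * B := by rw [mul_assoc]
    _ = B := h2

/-- Eigenvectors of the cone Laplacian: the lifted `Psi k`, the vector
`(1,…,1,-n)` and the all-ones vector. -/
noncomputable def coneW (n : ℕ) (Psi : Fin (n-1) → Fin n → ℝ) :
    (Fin (n-1) ⊕ Bool) → (Fin n ⊕ Unit) → ℝ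
  | .inl k, .inl u => Psi k u
  | .inl _, .inr _ => 0
  | .inr false, .inl _ => 1
  | .inr false, .inr _ => -(n : ℝ)
  | .inr true, _ => 1

/-- Coefficients of the pseudoinverse in the eigenbasis. -/
noncomputable def coneDD (n m : ℕ) (lam : Fin (n-1) → ℝ) : Fin (n-1) ⊕ Bool → ℝ :=
  Sum.elim (fun k => 1/(lam k + (m:ℝ)))
    (fun b => if b then 0 else 1/((n:ℝ)*(m:ℝ)*((n:ℝ)+1)^2))

/-- Normalizing coefficients of the eigenbasis. -/
noncomputable def coneCC (n : ℕ) : Fin (n-1) ⊕ Bool → ℝ :=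
  Sum.elim (fun _ => 1)
    (fun b => if b then 1/((n:ℝ)+1) else 1/((n:ℝ)*((n:ℝ)+1)))

/-- Eigenvalues of the cone Laplacian. -/
noncomputable def coneMu (n m : ℕ) (lam : Fin (n-1) → ℝ) : Fin (n-1) ⊕ Bool → ℝ :=
  Sum.elim (fun k => lam k + (m:ℝ)) (fun b => if b then 0 else (m:ℝ)*((n:ℝ)+1))

/-- Effective resistances in the weighted cone `C^m_G` over a connected graph `G`. -/
theorem effRes_cone (n : ℕ) (hn : 0 < n) (G : SimpleGraph (Fin n)) (hG : G.Connected)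
    (m : ℕ) (hm : 1 < m)
    (lam : Fin (n - 1) → ℝ) (Psi : Fin (n - 1) → Fin n → ℝ)
    (hlam : ∀ k, 0 < lam k)
    (hPsi : ∀ k, lapm G *ᵥ Psi k = lam k • Psi k)
    (hOrth : ∀ k k', Psi k ⬝ᵥ Psi k' = if k = k' then 1 else 0) :
    (∀ u v : Fin n, u ≠ v →
      effRes (coneLap G m) (Sum.inl u) (Sum.inl v)
        = ∑ k : Fin (n - 1), (Psi k u - Psi k v) ^ 2 / (lam k + m)) ∧
    (∀ u : Fin n,
      effRes (coneLap G m) (Sum.inl u) (Sum.inr ())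
        = ∑ k : Fin (n - 1), (Psi k u) ^ 2 / (lam k + m) + 1 / (n * m)) := by
  classical
  set L := coneLap G (m:ℝ) with hLdef
  set w := coneW n Psi with hwdef
  set dd := coneDD n m lam with hdddef
  set cc := coneCC n with hccdef
  set mu := coneMu n m lam with hmudef
  have hn0 : (0:ℝ) < (n:ℝ) := by exact_mod_cast hn
  have hm0 : (0:ℝ) < (m:ℝ) := by exact_mod_cast Nat.lt_of_lt_of_le Nat.zero_lt_one hm.le
  have hn1 : (0:ℝ) < (n:ℝ) + 1 := by linarith
  have hlm : ∀ k, lam k + (m:ℝ) ≠ 0 := fun k => by have := hlam k; positivity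
  -- entries of the cone Laplacian
  have hc1 : ∀ a b : Fin n, L (Sum.inl a) (Sum.inl b)
      = lapm G a b + (if a = b then (m:ℝ) else 0) := by
    intro a b
    by_cases h : a = b <;>
      simp [hLdef, coneLap, lapm, Fintype.sum_sum_type, SimpleGraph.lapMatrix,
        SimpleGraph.degMatrix, Matrix.diagonal_apply, SimpleGraph.adjMatrix_apply,
        SimpleGraph.degree_eq_sum_if_adj, h]
  have hc2 : ∀ (a : Fin n) (t : Unit), L (Sum.inl a) (Sum.inr t) = -(m:ℝ) := by
    intro a t; simp [hLdef, coneLap]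
  have hc3 : ∀ (t : Unit) (b : Fin n), L (Sum.inr t) (Sum.inl b) = -(m:ℝ) := by
    intro t b; simp [hLdef, coneLap]
  have hc4 : ∀ t t' : Unit, L (Sum.inr t) (Sum.inr t') = (n:ℝ) * (m:ℝ) := by
    intro t t'; simp [hLdef, coneLap, Fintype.sum_sum_type, mul_comm]
  -- row sums of lapm vanish
  have hlaprow : ∀ a : Fin n, ∑ b, lapm G a b = 0 := by
    intro a
    letI := Classical.decRel G.Adj
    have h0 : (G.lapMatrix ℝ) *ᵥ (fun _ => 1) = 0 := G.lapMatrix_mulVec_const_eq_zero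
    have := congrFun h0 a
    simpa [Matrix.mulVec, dotProduct, lapm] using this
  have hlapsym : ∀ a b : Fin n, lapm G a b = lapm G b a := by
    intro a b
    letI := Classical.decRel G.Adj
    have hs : (G.lapMatrix ℝ).IsSymm := G.isSymm_lapMatrix (R := ℝ)
    unfold lapm
    exact hs.apply b a
  -- eigenvectors of G sum to zero
  have hsum : ∀ k, ∑ u, Psi k u = 0 := by
    intro k
    have h := congrArg (fun f => ∑ u, f u) (hPsi k)
    simp only [Matrix.mulVec, dotProduct, Pi.smul_apply, smul_eq_mul] at h
    rw [Finset.sum_comm] at h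
    have h2 : (∑ v, (∑ u, lapm G u v) * Psi k v) = lam k * ∑ u, Psi k u := by
      rw [Finset.mul_sum, ← h]
      exact Finset.sum_congr rfl fun v _ => (Finset.sum_mul ..)
    have hcol : ∀ v : Fin n, ∑ u, lapm G u v = 0 := fun v => by
      rw [Finset.sum_congr rfl fun u _ => hlapsym u v]; exact hlaprow v
    simp only [hcol, zero_mul, Finset.sum_const_zero] at h2
    rcases mul_eq_zero.mp h2.symm with h3 | h3
    · exact absurd h3 (hlam k).ne'
    · exact h3
  -- eigenvalue equation for the cone Laplacian
  have heig : ∀ (p : Fin (n-1) ⊕ Bool) (x : Fin n ⊕ Unit),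
      (∑ y, L x y * w p y) = mu p * w p x := by
    rintro (k | b) (a | t)
    · -- p = inl k, x = inl a
      have hev : ∑ b, lapm G a b * Psi k b = lam k * Psi k a := by
        have := congrFun (hPsi k) a
        simpa [Matrix.mulVec, dotProduct] using this
      rw [Fintype.sum_sum_type]
      simp only [hwdef, coneW, hc1, hc2, mul_zero, Finset.sum_const_zero, add_zero,
        Finset.univ_unique, Finset.sum_singleton]
      rw [Finset.sum_congr rfl fun b _ => (add_mul (lapm G a b) _ (Psi k b)),
        Finset.sum_add_distrib, hev]
      have : ∑ b, (if a = b then (m:ℝ) else 0) * Psi k b = (m:ℝ) * Psi k a := by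
        simp [ite_mul, Finset.sum_ite_eq]
      rw [this, hmudef, coneMu]
      simp; ring
    · -- p = inl k, x = inr t
      rw [Fintype.sum_sum_type]
      simp only [hwdef, coneW, hc3, hc4, mul_zero, Finset.sum_const_zero, add_zero,
        Finset.univ_unique, Finset.sum_singleton]
      rw [← Finset.mul_sum, hsum k]
      try simp
    · -- p = inr b, x = inl a
      rw [Fintype.sum_sum_type]
      cases b <;>
      · simp only [hwdef, coneW, hc1, hc2, Finset.univ_unique, Finset.sum_singleton,
          mul_one, hmudef, coneMu]
        rw [Finset.sum_add_distrib, hlaprow]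
        simp [Finset.sum_ite_eq, mul_comm]
        try ring
    · -- p = inr b, x = inr t
      rw [Fintype.sum_sum_type]
      cases b <;>
        simp [hwdef, coneW, hc3, hc4, hmudef, coneMu, Finset.sum_const,
          nsmul_eq_mul] <;> ring
  -- Gram relations
  have hgram : ∀ p q : Fin (n-1) ⊕ Bool,
      (∑ x, w p x * (cc q * w q x)) = if p = q then 1 else 0 := by
    rintro (k | b) (k' | b')
    · have := hOrth k k'
      simp only [dotProduct] at this
      rw [Fintype.sum_sum_type]
      simp only [hwdef, coneW, hccdef, coneCC, Sum.elim_inl, one_mul, mul_zero,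
        Finset.univ_unique, Finset.sum_singleton,
        zero_mul]
      simp [this, Sum.inl.injEq]
    · rw [Fintype.sum_sum_type]
      cases b' <;>
        simp [hwdef, coneW, hccdef, coneCC, ← Finset.sum_mul, hsum k, mul_comm]
    · rw [Fintype.sum_sum_type]
      cases b <;>
        simp [hwdef, coneW, hccdef, coneCC, ← Finset.mul_sum, hsum k', mul_comm]
    · rw [Fintype.sum_sum_type]
      cases b <;> cases b' <;>
          simp [hwdef, coneW, hccdef, coneCC, Finset.sum_const, nsmul_eq_mul] <;>
          field_simp <;> ring
  have hnne : (n:ℝ) ≠ 0 := hn0.ne'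
  have hmne : (m:ℝ) ≠ 0 := hm0.ne'
  have hn1ne : (n:ℝ) + 1 ≠ 0 := hn1.ne'
  -- completeness of the eigenbasis
  have card_eq : Fintype.card (Fin (n-1) ⊕ Bool) = Fintype.card (Fin n ⊕ Unit) := by
    simp; omega
  set e := Fintype.equivOfCardEq card_eq with hedef
  set M : Matrix (Fin n ⊕ Unit) (Fin n ⊕ Unit) ℝ :=
    Matrix.of fun i x => w (e.symm i) x with hMdef
  set N : Matrix (Fin n ⊕ Unit) (Fin n ⊕ Unit) ℝ :=
    Matrix.of fun x i => cc (e.symm i) * w (e.symm i) x with hNdef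
  have hMN : M * N = 1 := by
    ext i j
    rw [Matrix.mul_apply]
    simp only [hMdef, hNdef, Matrix.of_apply]
    rw [hgram (e.symm i) (e.symm j)]
    simp [Matrix.one_apply]
  have hNM : N * M = 1 := mul_eq_one_comm.mp hMN
  have hcomp : ∀ x y : Fin n ⊕ Unit,
      (∑ p, cc p * w p x * w p y) = if x = y then 1 else 0 := by
    intro x y
    calc ∑ p, cc p * w p x * w p y
        = ∑ i, N x i * M i y := by
          rw [← Equiv.sum_comp e.symm (fun p => cc p * w p x * w p y)]
          exact Finset.sum_congr rfl fun i _ => by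
            simp only [hMdef, hNdef, Matrix.of_apply]
      _ = (N * M) x y := (Matrix.mul_apply).symm
      _ = (1 : Matrix (Fin n ⊕ Unit) (Fin n ⊕ Unit) ℝ) x y := by rw [hNM]
      _ = if x = y then 1 else 0 := Matrix.one_apply
  -- the pseudoinverse candidate
  set H : Matrix (Fin n ⊕ Unit) (Fin n ⊕ Unit) ℝ :=
    Matrix.of fun x y => ∑ p, dd p * w p x * w p y with hHdef
  have hdm : ∀ p, dd p * mu p = cc p - (if p = Sum.inr true then 1/((n:ℝ)+1) else 0) := by
    rintro (k | b)
    · simp only [hdddef, coneDD, hmudef, coneMu, hccdef, coneCC, Sum.elim_inl]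
      rw [if_neg (by simp), sub_zero]
      exact one_div_mul_cancel (hlm k)
    · cases b <;>
        simp only [hdddef, coneDD, hmudef, coneMu, hccdef, coneCC, Sum.elim_inr,
          if_true, if_false, Bool.false_eq_true, reduceIte, Sum.inr.injEq] <;>
        field_simp <;> ring
  have hwt : ∀ x, w (Sum.inr true) x = 1 := by rintro (a | t) <;> simp [hwdef, coneW]
  have hLH : ∀ x y, (L * H) x y = (if x = y then 1 else 0) - 1/((n:ℝ)+1) := by
    intro x y
    rw [Matrix.mul_apply]
    calc ∑ z, L x z * H z y
        = ∑ z, ∑ p, (dd p * w p y) * (L x z * w p z) := by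
          refine Finset.sum_congr rfl fun z _ => ?_
          simp only [hHdef, Matrix.of_apply]
          rw [Finset.mul_sum]
          exact Finset.sum_congr rfl fun p _ => by ring
      _ = ∑ p, ∑ z, (dd p * w p y) * (L x z * w p z) := Finset.sum_comm
      _ = ∑ p, (dd p * w p y) * (mu p * w p x) := by
          refine Finset.sum_congr rfl fun p _ => ?_
          rw [← Finset.mul_sum, heig p x]
      _ = ∑ p, (cc p * w p x * w p y
            - (if p = Sum.inr true then 1/((n:ℝ)+1) else 0) * (w p x * w p y)) := by
          refine Finset.sum_congr rfl fun p _ => ?_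
          have h := hdm p
          calc (dd p * w p y) * (mu p * w p x) = (dd p * mu p) * (w p x * w p y) := by ring
            _ = _ := by rw [h]; ring
      _ = (if x = y then 1 else 0) - 1/((n:ℝ)+1) := by
          rw [Finset.sum_sub_distrib, hcomp x y]
          congr 1
          simp [ite_mul, Finset.sum_ite_eq', hwt]
  have hHsym : Hᵀ = H := by
    ext x y
    simp only [Matrix.transpose_apply, hHdef, Matrix.of_apply]
    exact Finset.sum_congr rfl fun p _ => by ring
  have hLsym : ∀ x y, L x y = L y x := by
    rintro (a | t) (b | t')
    · rw [hc1, hc1, hlapsym a b]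
      by_cases h : a = b
      · subst h; rfl
      · rw [if_neg h, if_neg (fun hh => h hh.symm)]
    · rw [hc2, hc3]
    · rw [hc3, hc2]
    · rw [hc4]
  have hLsymM : Lᵀ = L := by
    ext x y; rw [Matrix.transpose_apply]; exact hLsym y x
  have hP3 : (L * H)ᵀ = L * H := by
    ext x y
    rw [Matrix.transpose_apply, hLH, hLH]
    by_cases h : x = y
    · subst h; rfl
    · rw [if_neg h, if_neg (fun hh => h hh.symm)]
  have hHLsym : H * L = L * H := by
    calc H * L = (Lᵀ * Hᵀ)ᵀ := by rw [← Matrix.transpose_mul, Matrix.transpose_transpose]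
      _ = (L * H)ᵀ := by rw [hLsymM, hHsym]
      _ = L * H := hP3
  have hP4 : (H * L)ᵀ = H * L := by rw [hHLsym]; exact hP3
  have hLrow : ∀ x, ∑ y, L x y = 0 := by
    rintro (a | t)
    · rw [Fintype.sum_sum_type]
      simp only [hc1, hc2, Finset.univ_unique, Finset.sum_singleton]
      rw [Finset.sum_add_distrib, hlaprow]
      simp [Finset.sum_ite_eq]
    · rw [Fintype.sum_sum_type]
      simp [hc3, hc4, Finset.sum_const, nsmul_eq_mul]
  have hLcol : ∀ y, ∑ x, L x y = 0 := fun y => by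
    rw [Finset.sum_congr rfl fun x _ => hLsym x y]; exact hLrow y
  have hHcol : ∀ y, ∑ x, H x y = 0 := by
    intro y
    have hws : ∀ p, dd p * (∑ z, w p z) = 0 := by
      rintro (k | b)
      · rw [Fintype.sum_sum_type]; simp [hwdef, coneW, hsum k]
      · cases b
        · rw [Fintype.sum_sum_type]
          simp [hwdef, coneW, Finset.sum_const, nsmul_eq_mul]
        · simp [hdddef, coneDD]
    calc ∑ x, H x y = ∑ x, ∑ p, (dd p * w p y) * w p x := by
          refine Finset.sum_congr rfl fun x _ => ?_
          simp only [hHdef, Matrix.of_apply]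
          exact Finset.sum_congr rfl fun p _ => by ring
      _ = ∑ p, (dd p * w p y) * ∑ x, w p x := by
          rw [Finset.sum_comm]
          exact Finset.sum_congr rfl fun p _ => (Finset.mul_sum ..).symm
      _ = 0 := by
          refine Finset.sum_eq_zero fun p _ => ?_
          have h := hws p
          calc (dd p * w p y) * ∑ x, w p x = (dd p * ∑ x, w p x) * w p y := by ring
            _ = 0 := by rw [h, zero_mul]
  have hpen1 : L * H * L = L := by
    ext x y
    rw [Matrix.mul_apply]
    calc ∑ z, (L * H) x z * L z y
        = ∑ z, ((if x = z then (1:ℝ) else 0) * L z y - 1/((n:ℝ)+1) * L z y) := by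
          refine Finset.sum_congr rfl fun z _ => ?_
          rw [hLH]; ring
      _ = L x y - 1/((n:ℝ)+1) * ∑ z, L z y := by
          rw [Finset.sum_sub_distrib, ← Finset.mul_sum]
          congr 1
          simp [ite_mul, Finset.sum_ite_eq]
      _ = L x y := by rw [hLcol y]; ring
  have hpen2 : H * L * H = H := by
    rw [hHLsym]
    ext x y
    rw [Matrix.mul_apply]
    calc ∑ z, (L * H) x z * H z y
        = ∑ z, ((if x = z then (1:ℝ) else 0) * H z y - 1/((n:ℝ)+1) * H z y) := by
          refine Finset.sum_congr rfl fun z _ => ?_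
          rw [hLH]; ring
      _ = H x y - 1/((n:ℝ)+1) * ∑ z, H z y := by
          rw [Finset.sum_sub_distrib, ← Finset.mul_sum]
          congr 1
          simp [ite_mul, Finset.sum_ite_eq]
      _ = H x y := by rw [hHcol y]; ring
  have hmp : L.mpinv = H := Matrix.mpinv_eq L H hpen1 hpen2 hP3 hP4
  -- quadratic form formula
  have key : ∀ X Y : Fin n ⊕ Unit, effRes L X Y = ∑ p, dd p * (w p X - w p Y)^2 := by
    intro X Y
    rw [effRes, hmp]
    set x : (Fin n ⊕ Unit) → ℝ := Pi.single X 1 - Pi.single Y 1 with hxdef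
    have hdot : ∀ p, (∑ b, w p b * x b) = w p X - w p Y := by
      intro p
      simp only [hxdef, Pi.sub_apply, Pi.single_apply, mul_sub]
      rw [Finset.sum_sub_distrib]
      congr 1 <;> simp [mul_ite, Finset.sum_ite_eq']
    have hrow : ∀ a, (∑ b, H a b * x b) = ∑ p, dd p * w p a * (w p X - w p Y) := by
      intro a
      calc ∑ b, H a b * x b = ∑ b, ∑ p, (dd p * w p a) * (w p b * x b) := by
            refine Finset.sum_congr rfl fun b _ => ?_
            simp only [hHdef, Matrix.of_apply]
            rw [Finset.sum_mul]
            exact Finset.sum_congr rfl fun p _ => by ring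
        _ = ∑ p, ∑ b, (dd p * w p a) * (w p b * x b) := Finset.sum_comm
        _ = ∑ p, dd p * w p a * (w p X - w p Y) := by
            refine Finset.sum_congr rfl fun p _ => ?_
            rw [← Finset.mul_sum, hdot p]
    calc x ⬝ᵥ (H *ᵥ x) = ∑ a, x a * ∑ b, H a b * x b := rfl
      _ = ∑ a, ∑ p, (dd p * (w p X - w p Y)) * (w p a * x a) := by
          refine Finset.sum_congr rfl fun a _ => ?_
          rw [hrow a, Finset.mul_sum]
          exact Finset.sum_congr rfl fun p _ => by ring
      _ = ∑ p, ∑ a, (dd p * (w p X - w p Y)) * (w p a * x a) := Finset.sum_comm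
      _ = ∑ p, dd p * (w p X - w p Y)^2 := by
          refine Finset.sum_congr rfl fun p _ => ?_
          rw [← Finset.mul_sum, hdot p]; ring
  constructor
  · intro u v huv
    rw [key (Sum.inl u) (Sum.inl v), Fintype.sum_sum_type]
    have h2 : (∑ b : Bool, dd (Sum.inr b)
        * (w (Sum.inr b) (Sum.inl u) - w (Sum.inr b) (Sum.inl v))^2) = 0 := by
      rw [Fintype.sum_bool]
      simp [hwdef, coneW]
    rw [h2, add_zero]
    refine Finset.sum_congr rfl fun k _ => ?_
    simp only [hdddef, coneDD, Sum.elim_inl, hwdef, coneW]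
    ring
  · intro u
    rw [key (Sum.inl u) (Sum.inr ()), Fintype.sum_sum_type]
    congr 1
    · refine Finset.sum_congr rfl fun k _ => ?_
      simp only [hdddef, coneDD, Sum.elim_inl, hwdef, coneW]
      ring
    · rw [Fintype.sum_bool]
      simp only [hdddef, coneDD, Sum.elim_inr, hwdef, coneW, if_true, if_false,
        Bool.false_eq_true, reduceIte]
      field_simp
      ring
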